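/- Let φ be an automorphism of a compact abelian group K = (ℝ/ℤ)² given by φ(x+ℤ, y+ℤ) = (x+y+ℤ, x+2y+ℤ). Then the contraction group C(φ) = {v ∈ K : φⁿ(v) → 0 as n → ∞} equals {(t+ℤ, ((1−√5)/2)t+ℤ) : t ∈ ℝ}, which is a dense subgroup of K. -/

import Mathlib

open Filter Real goldenRatio Set
noncomputable section
namespace TCGAux
local notation "𝕋" => AddCircle (1 : ℝ)
local notation "α" => (1 - Real.sqrt 5) / 2

lemma sqrt5_sq : Real.sqrt 5 ^ 2 = 5 := Real.sq_sqrt (by norm_num)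
lemma alpha_sq : α ^ 2 = α + 1 := by nlinarith [sqrt5_sq]
lemma alpha_neg : α < 0 := by nlinarith [sqrt5_sq, Real.sqrt_nonneg 5]
lemma alpha_gt : (-1 : ℝ) < α := by nlinarith [sqrt5_sq, Real.sqrt_nonneg 5]

lemma int_coe_zero (m : ℤ) : ((m : ℝ) : 𝕋) = 0 := by
  rw [AddCircle.coe_eq_zero_iff]; exact ⟨m, by simp⟩

lemma exists_lift (a : 𝕋) : ∃ x : ℝ, (x : 𝕋) = a ∧ |x| = ‖a‖ := by
  obtain ⟨y, rfl⟩ := QuotientAddGroup.mk_surjective a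
  refine ⟨y - round y, ?_, ?_⟩
  · rw [AddCircle.coe_sub, int_coe_zero, sub_zero]
  · have h := AddCircle.norm_eq (p := (1:ℝ)) (x := y)
    rw [inv_one, one_mul, mul_one] at h
    rw [← h]

abbrev F (p : 𝕋 × 𝕋) : 𝕋 × 𝕋 := (p.1 + p.2, p.1 + p.2 + p.2)

abbrev L : Set (𝕋 × 𝕋) := {p : 𝕋 × 𝕋 | ∃ t : ℝ, p = ((t : 𝕋), ((α * t : ℝ) : 𝕋))}

lemma F_line (s : ℝ) :
    F ((s : 𝕋), ((α * s : ℝ) : 𝕋)) = (((α ^ 2 * s : ℝ) : 𝕋), ((α * (α ^ 2 * s) : ℝ) : 𝕋)) := by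
  refine Prod.ext ?_ ?_
  · show (s : 𝕋) + ((α * s : ℝ) : 𝕋) = _
    rw [← AddCircle.coe_add]
    congr 1
    linear_combination (-s) * alpha_sq
  · show (s : 𝕋) + ((α * s : ℝ) : 𝕋) + ((α * s : ℝ) : 𝕋) = _
    rw [← AddCircle.coe_add, ← AddCircle.coe_add]
    congr 1
    linear_combination (-(1 + α) * s) * alpha_sq

lemma F_iter_line (t : ℝ) (n : ℕ) :
    F^[n] ((t : 𝕋), ((α * t : ℝ) : 𝕋)) =
      ((((α ^ 2) ^ n * t : ℝ) : 𝕋), ((α * ((α ^ 2) ^ n * t) : ℝ) : 𝕋)) := by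
  induction n with
  | zero => simp
  | succ n ih =>
      rw [Function.iterate_succ_apply', ih, F_line]
      refine Prod.ext ?_ ?_ <;> · dsimp only; congr 1; ring

lemma line_tendsto (t : ℝ) :
    Tendsto (fun n : ℕ => F^[n] ((t : 𝕋), ((α * t : ℝ) : 𝕋))) atTop (nhds 0) := by
  have habs : |α ^ 2| < 1 := by
    rw [abs_lt]; constructor <;> nlinarith [alpha_neg, alpha_gt]
  have h1 : Tendsto (fun n : ℕ => (α ^ 2) ^ n * t) atTop (nhds 0) := by
    simpa using (tendsto_pow_atTop_nhds_zero_of_abs_lt_one habs).mul_const t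
  have hg : Continuous fun s : ℝ => ((s : 𝕋), ((α * s : ℝ) : 𝕋)) := by
    exact ((AddCircle.continuous_mk' 1)).prodMk
      ((AddCircle.continuous_mk' 1).comp (continuous_const.mul continuous_id))
  have := (hg.tendsto 0).comp h1
  simp only [Function.comp_def, mul_zero] at this
  have h0 : (((0:ℝ) : 𝕋), (((0:ℝ)) : 𝕋)) = (0 : 𝕋 × 𝕋) := rfl
  rw [h0] at this
  simpa only [F_iter_line] using this


lemma mem_L_of_F {p : 𝕋 × 𝕋} (h : F p ∈ L) : p ∈ L := by
  obtain ⟨t, ht⟩ := h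
  have h1 : p.1 + p.2 = (t : 𝕋) := congrArg Prod.fst ht
  have h2 : p.1 + p.2 + p.2 = ((α * t : ℝ) : 𝕋) := congrArg Prod.snd ht
  refine ⟨2 * t - α * t, Prod.ext ?_ ?_⟩
  · have hp1 : p.1 = (t : 𝕋) + (t : 𝕋) - ((α * t : ℝ) : 𝕋) := by
      rw [← h1, ← h2]; abel
    rw [hp1, ← AddCircle.coe_add, ← AddCircle.coe_sub]
    dsimp only
    congr 1
    ring
  · have hp2 : p.2 = ((α * t : ℝ) : 𝕋) - (t : 𝕋) := by
      rw [← h1, ← h2]; abel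
    rw [hp2, ← AddCircle.coe_sub]
    congr 1
    linear_combination t * alpha_sq

lemma mem_L_of_iter {v : 𝕋 × 𝕋} {N : ℕ} (h : F^[N] v ∈ L) : v ∈ L := by
  induction N generalizing v with
  | zero => exact h
  | succ n ih =>
      rw [Function.iterate_succ_apply] at h
      exact mem_L_of_F (ih h)

lemma int_eq_zero_of_abs_lt {m : ℤ} (h : |(m : ℝ)| < 1) : m = 0 := by
  rw [abs_lt] at h
  have h1 : (-1 : ℤ) < m := by exact_mod_cast h.1
  have h2 : m < 1 := by exact_mod_cast h.2
  omega

lemma contraction_mem_line {v : 𝕋 × 𝕋}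
    (hv : Tendsto (fun n : ℕ => F^[n] v) atTop (nhds 0)) : v ∈ L := by
  have h1 : Tendsto (fun n : ℕ => (F^[n] v).1) atTop (nhds 0) :=
    (continuous_fst.tendsto 0).comp hv
  have h2 : Tendsto (fun n : ℕ => (F^[n] v).2) atTop (nhds 0) :=
    (continuous_snd.tendsto 0).comp hv
  choose x hx hxn using fun n : ℕ => exists_lift ((F^[n] v).1)
  choose y hy hyn using fun n : ℕ => exists_lift ((F^[n] v).2)
  have hxabs : Tendsto (fun n => |x n|) atTop (nhds 0) := by
    simp only [hxn]; simpa using h1.norm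
  have hyabs : Tendsto (fun n => |y n|) atTop (nhds 0) := by
    simp only [hyn]; simpa using h2.norm
  have hxt : Tendsto x atTop (nhds 0) :=
    (tendsto_zero_iff_abs_tendsto_zero x).2 hxabs
  have hyt : Tendsto y atTop (nhds 0) :=
    (tendsto_zero_iff_abs_tendsto_zero y).2 hyabs
  have hev : ∀ᶠ n in atTop, |x n| < 8⁻¹ ∧ |y n| < 8⁻¹ := by
    filter_upwards [hxabs.eventually_lt_const (by norm_num : (0:ℝ) < 8⁻¹),
      hyabs.eventually_lt_const (by norm_num : (0:ℝ) < 8⁻¹)] with n hn1 hn2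
    exact ⟨hn1, hn2⟩
  obtain ⟨N, hN⟩ := eventually_atTop.1 hev
  have key : ∀ n, N ≤ n → x (n + 1) = x n + y n ∧ y (n + 1) = x n + y n + y n := by
    intro n hn
    have hFn1 : (F^[n+1] v) = F (F^[n] v) := Function.iterate_succ_apply' F n v
    have e1 : ((x (n + 1) - (x n + y n) : ℝ) : 𝕋) = 0 := by
      simp only [AddCircle.coe_sub, AddCircle.coe_add, hx, hy, hFn1]
      show (F^[n] v).1 + (F^[n] v).2 - _ = 0
      abel
    have e2 : ((y (n + 1) - (x n + y n + y n) : ℝ) : 𝕋) = 0 := by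
      simp only [AddCircle.coe_sub, AddCircle.coe_add, hx, hy, hFn1]
      show (F^[n] v).1 + (F^[n] v).2 + (F^[n] v).2 - _ = 0
      abel
    obtain ⟨m1, hm1⟩ := (AddCircle.coe_eq_zero_iff (1:ℝ)).1 e1
    obtain ⟨m2, hm2⟩ := (AddCircle.coe_eq_zero_iff (1:ℝ)).1 e2
    rw [zsmul_eq_mul, mul_one] at hm1 hm2
    have b0 := (hN n hn).1
    have b1 := (hN n hn).2
    have b2 := (hN (n + 1) (by omega)).1
    have b3 := (hN (n + 1) (by omega)).2
    have hz1 : m1 = 0 := int_eq_zero_of_abs_lt (by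
      rw [hm1]
      calc |x (n+1) - (x n + y n)| ≤ |x (n+1)| + |x n + y n| := abs_sub _ _
        _ ≤ |x (n+1)| + (|x n| + |y n|) := by gcongr; exact abs_add_le _ _
        _ < 1 := by linarith)
    have hz2 : m2 = 0 := int_eq_zero_of_abs_lt (by
      rw [hm2]
      calc |y (n+1) - (x n + y n + y n)| ≤ |y (n+1)| + |x n + y n + y n| := abs_sub _ _
        _ ≤ |y (n+1)| + (|x n + y n| + |y n|) := by gcongr; exact abs_add_le _ _
        _ ≤ |y (n+1)| + (|x n| + |y n| + |y n|) := by gcongr; exact abs_add_le _ _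
        _ < 1 := by linarith)
    rw [hz1] at hm1; rw [hz2] at hm2
    push_cast at hm1 hm2
    exact ⟨by linarith, by linarith⟩
  have hu : ∀ k : ℕ, y (N + k) - α * x (N + k) = (2 - α) ^ k * (y N - α * x N) := by
    intro k
    induction k with
    | zero => simp
    | succ k ih =>
        have hk := key (N + k) (by omega)
        show y ((N + k) + 1) - α * x ((N + k) + 1) = _
        rw [hk.1, hk.2]
        linear_combination (2 - α) * ih - (x (N + k)) * alpha_sq
  have hmono : Tendsto (fun k : ℕ => N + k) atTop atTop :=
    tendsto_atTop_mono (fun k => Nat.le_add_left k N) tendsto_id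
  have htail : Tendsto (fun k : ℕ => |y (N + k) - α * x (N + k)|) atTop (nhds 0) := by
    have h3 : Tendsto (fun n : ℕ => |y n - α * x n|) atTop (nhds 0) := by
      simpa using (hyt.sub (hxt.const_mul α)).abs
    exact h3.comp hmono
  have hlam : (1 : ℝ) ≤ 2 - α := by linarith [alpha_neg]
  have hle : ∀ k : ℕ, |y N - α * x N| ≤ |y (N + k) - α * x (N + k)| := by
    intro k
    rw [hu k, abs_mul, abs_of_nonneg (by positivity : (0:ℝ) ≤ (2 - α) ^ k)]
    have hpow : (1:ℝ) ≤ (2 - α) ^ k := by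
      calc (1:ℝ) = 1 ^ k := (one_pow k).symm
        _ ≤ (2 - α) ^ k := pow_le_pow_left₀ (by norm_num) hlam k
    nlinarith [abs_nonneg (y N - α * x N)]
  have hc : |y N - α * x N| ≤ 0 := ge_of_tendsto' htail hle
  have hyN : y N = α * x N := by
    have := abs_nonneg (y N - α * x N); have h0 : |y N - α * x N| = 0 := le_antisymm hc this
    have := abs_eq_zero.1 h0; linarith
  have hmem : F^[N] v ∈ L := by
    refine ⟨x N, Prod.ext ?_ ?_⟩
    · exact (hx N).symm
    · rw [← hyN]; exact (hy N).symm
  exact mem_L_of_iter hmem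

def piHom : ℝ →+ 𝕋 := QuotientAddGroup.mk' (AddSubgroup.zmultiples (1:ℝ))

def fHom : ℝ →+ 𝕋 × 𝕋 := piHom.prod (piHom.comp (AddMonoidHom.mulLeft α))

lemma fHom_apply (t : ℝ) : fHom t = ((t : 𝕋), ((α * t : ℝ) : 𝕋)) := rfl

def S : AddSubgroup (𝕋 × 𝕋) := fHom.range

lemma S_eq : (S : Set (𝕋 × 𝕋)) = L := by
  ext p
  simp only [S, AddMonoidHom.coe_range, Set.mem_range, L, Set.mem_setOf_eq]
  exact exists_congr fun t => by rw [fHom_apply, eq_comm]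

lemma dense_D : Dense ((AddSubgroup.closure {1, α} : AddSubgroup ℝ) : Set ℝ) := by
  rcases AddSubgroup.dense_or_cyclic (AddSubgroup.closure {1, α}) with h | ⟨a, ha⟩
  · exact h
  · exfalso
    have h1 : (1 : ℝ) ∈ AddSubgroup.closure {1, α} :=
      AddSubgroup.subset_closure (by simp)
    have h2 : α ∈ AddSubgroup.closure {1, α} :=
      AddSubgroup.subset_closure (by simp)
    rw [ha, AddSubgroup.mem_closure_singleton] at h1 h2
    obtain ⟨m, hm⟩ := h1
    obtain ⟨n, hn⟩ := h2
    rw [zsmul_eq_mul] at hm hn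
    have hm0 : (m : ℝ) ≠ 0 := by
      rintro h0
      rw [h0, zero_mul] at hm
      norm_num at hm
    refine goldenConj_irrational ⟨(n / m : ℚ), ?_⟩
    show ((n / m : ℚ) : ℝ) = (1 - Real.sqrt 5) / 2
    push_cast
    rw [div_eq_iff hm0]
    linear_combination (m : ℝ) * hn - (n : ℝ) * hm

lemma dense_image_D :
    Dense ((fun r : ℝ => (r : 𝕋)) '' ((AddSubgroup.closure {1, α} : AddSubgroup ℝ) : Set ℝ)) := by
  refine DenseRange.dense_image ?_ (AddCircle.continuous_mk' 1) dense_D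
  exact (QuotientAddGroup.mk'_surjective (AddSubgroup.zmultiples (1:ℝ))).denseRange

lemma vert_mem : ∀ d ∈ (AddSubgroup.closure {1, α} : AddSubgroup ℝ),
    ((0 : 𝕋), (d : 𝕋)) ∈ S := by
  have hle : AddSubgroup.closure {1, α} ≤
      (S.comap (AddMonoidHom.inr 𝕋 𝕋)).comap piHom := by
    rw [AddSubgroup.closure_le]
    rintro z hz
    rcases hz with rfl | rfl
    · show ((0 : 𝕋), ((1 : ℝ) : 𝕋)) ∈ S
      rw [AddCircle.coe_period]
      exact S.zero_mem
    · show ((0 : 𝕋), ((α : ℝ) : 𝕋)) ∈ S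
      refine ⟨1, ?_⟩
      rw [fHom_apply]
      refine Prod.ext ?_ ?_
      · exact AddCircle.coe_period 1
      · show ((α * 1 : ℝ) : 𝕋) = ((α : ℝ) : 𝕋)
        rw [mul_one]
  intro d hd
  exact hle hd

lemma dense_L : Dense L := by
  intro p
  obtain ⟨r, hr, -⟩ := exists_lift p.1
  have hq : ((r : 𝕋), ((α * r : ℝ) : 𝕋)) ∈ S := ⟨r, rfl⟩
  have h0 : ((0 : 𝕋), p.2 - ((α * r : ℝ) : 𝕋)) ∈ closure (S : Set (𝕋 × 𝕋)) := by
    have hsub2 : ({(0 : 𝕋)} ×ˢ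
        ((fun r : ℝ => (r : 𝕋)) '' ((AddSubgroup.closure {1, α} : AddSubgroup ℝ) : Set ℝ)))
        ⊆ (S : Set (𝕋 × 𝕋)) := by
      rintro ⟨u, w⟩ ⟨hu, d, hd, rfl⟩
      rcases hu with rfl
      exact vert_mem d hd
    refine closure_mono hsub2 ?_
    rw [closure_prod_eq]
    exact ⟨subset_closure rfl, dense_image_D _⟩
  have hmem : p ∈ closure (S : Set (𝕋 × 𝕋)) := by
    have hp : p = ((r : 𝕋), ((α * r : ℝ) : 𝕋)) + ((0 : 𝕋), p.2 - ((α * r : ℝ) : 𝕋)) := by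
      refine Prod.ext ?_ ?_
      · show p.1 = (r : 𝕋) + 0
        rw [add_zero, hr]
      · show p.2 = ((α * r : ℝ) : 𝕋) + (p.2 - ((α * r : ℝ) : 𝕋))
        abel
    have hm1 : ((r : 𝕋), ((α * r : ℝ) : 𝕋)) ∈ S.topologicalClosure :=
      S.le_topologicalClosure hq
    have hm2 : ((0 : 𝕋), p.2 - ((α * r : ℝ) : 𝕋)) ∈ S.topologicalClosure := by
      rwa [← AddSubgroup.topologicalClosure_coe] at h0
    have := S.topologicalClosure.add_mem hm1 hm2
    rw [← hp] at this
    rwa [← AddSubgroup.topologicalClosure_coe]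
  rwa [S_eq] at hmem

end TCGAux

open TCGAux in
/-- For the automorphism `φ(x,y) = (x+y, x+2y)` of the 2-torus `(ℝ/ℤ)²`, the
contraction group `C(φ) = {v : φⁿ(v) → 0}` equals
`{(t, ((1-√5)/2)t) mod ℤ² : t ∈ ℝ}`, which is a dense subgroup of the torus. -/
theorem torus_contraction_group :
    ({v : AddCircle (1 : ℝ) × AddCircle (1 : ℝ) |
        Filter.Tendsto
          (fun n : ℕ =>
            (fun p : AddCircle (1 : ℝ) × AddCircle (1 : ℝ) =>
              (p.1 + p.2, p.1 + p.2 + p.2))^[n] v)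
          Filter.atTop (nhds 0)} =
      {p : AddCircle (1 : ℝ) × AddCircle (1 : ℝ) |
        ∃ t : ℝ, p = ((t : AddCircle (1 : ℝ)),
          (((1 - Real.sqrt 5) / 2 * t : ℝ) : AddCircle (1 : ℝ)))}) ∧
    Dense {p : AddCircle (1 : ℝ) × AddCircle (1 : ℝ) |
        ∃ t : ℝ, p = ((t : AddCircle (1 : ℝ)),
          (((1 - Real.sqrt 5) / 2 * t : ℝ) : AddCircle (1 : ℝ)))} ∧
    ∃ S : AddSubgroup (AddCircle (1 : ℝ) × AddCircle (1 : ℝ)),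
      (S : Set (AddCircle (1 : ℝ) × AddCircle (1 : ℝ))) =
        {p | ∃ t : ℝ, p = ((t : AddCircle (1 : ℝ)),
          (((1 - Real.sqrt 5) / 2 * t : ℝ) : AddCircle (1 : ℝ)))} := by
  refine ⟨?_, dense_L, S, S_eq⟩
  ext v
  simp only [Set.mem_setOf_eq]
  constructor
  · intro hv
    exact contraction_mem_line hv
  · rintro ⟨t, rfl⟩
    exact line_tendsto t
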